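/- arXiv:1503.07053 — 12 statements merged into one kernel-verified Lean document; each statement's English description precedes it below -/
import Mathlib

section
/- Let A = diag(a_1,…,a_n) be a real diagonal n×n matrix, κ ∈ ℝ, and let X, P be real n×r matrices satisfying X^T X = I_r and X^T P + P^T X = 0. Define Λ = −X^T A X − P^T P, Ẋ = P − (1+2κ) X P^T X, Ṗ = A X + (1+2κ) P X^T P + X Λ, and let Φ = P X^T − X P^T. Then for every λ ∈ ℝ the derivative of the Lax matrix ℒ(λ) = λΦ + X X^T + λ² A along the flow, namely λ(Ṗ X^T + P Ẋ^T − Ẋ P^T − X Ṗ^T) + (Ẋ X^T + X Ẋ^T), equals the commutator [𝒩(λ), ℒ(λ)], where 𝒩(λ) = Φ + λ A. -/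
open Matrix

/-- The 'big' n×n Lax representation of the Neumann systems on the Stiefel
variety `V_{n,r}`: along the Neumann flow with metric parameter `κ`, the
derivative of `ℒ(λ) = λΦ + XXᵀ + λ²A` equals the commutator `[𝒩(λ), ℒ(λ)]`
with `𝒩(λ) = Φ + λA`, for every `λ`. -/
theorem stmt_0 {n r : ℕ} (a : Fin n → ℝ) (κ : ℝ)
    (A : Matrix (Fin n) (Fin n) ℝ) (hA : A = Matrix.diagonal a)
    (X P : Matrix (Fin n) (Fin r) ℝ)
    (hX : Xᵀ * X = 1) (hXP : Xᵀ * P + Pᵀ * X = 0)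
    (Λ : Matrix (Fin r) (Fin r) ℝ) (hΛ : Λ = -(Xᵀ * A * X) - Pᵀ * P)
    (Xd Pd : Matrix (Fin n) (Fin r) ℝ)
    (hXd : Xd = P - (1 + 2 * κ) • (X * Pᵀ * X))
    (hPd : Pd = A * X + (1 + 2 * κ) • (P * Xᵀ * P) + X * Λ)
    (Φ : Matrix (Fin n) (Fin n) ℝ) (hΦ : Φ = P * Xᵀ - X * Pᵀ) :
    ∀ lam : ℝ,
      lam • (Pd * Xᵀ + P * Xdᵀ - Xd * Pᵀ - X * Pdᵀ) + (Xd * Xᵀ + X * Xdᵀ) =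
        (Φ + lam • A) * (lam • Φ + X * Xᵀ + (lam ^ 2) • A) -
          (lam • Φ + X * Xᵀ + (lam ^ 2) • A) * (Φ + lam • A) := by
  intro lam
  have hAT : Aᵀ = A := by rw [hA, Matrix.diagonal_transpose]
  have hP1 : Pᵀ * X = -(Xᵀ * P) := by linear_combination (norm := noncomm_ring) hXP
  have hP2 : ∀ M : Matrix (Fin r) (Fin n) ℝ, Pᵀ * (X * M) = -(Xᵀ * (P * M)) := by
    intro M; rw [← Matrix.mul_assoc, hP1, ← Matrix.mul_assoc, Matrix.neg_mul]
  have hX2 : ∀ M : Matrix (Fin r) (Fin n) ℝ, Xᵀ * (X * M) = M := by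
    intro M; rw [← Matrix.mul_assoc, hX, Matrix.one_mul]
  subst hΛ hXd hPd hΦ
  simp only [transpose_add, transpose_sub, transpose_mul, transpose_smul, transpose_neg,
    transpose_transpose, hAT, Matrix.mul_add, Matrix.add_mul, Matrix.mul_sub, Matrix.sub_mul,
    Matrix.mul_smul, Matrix.smul_mul, Matrix.neg_mul, Matrix.mul_neg, smul_add, smul_sub,
    smul_neg, Matrix.mul_assoc, hX, hP1, hP2, hX2, Matrix.mul_one, Matrix.one_mul,
    smul_smul, neg_neg]
  abel_nf
  ring_nf
  abel
end

section
/- Let A = diag(a_1,…,a_n) be a real diagonal n×n matrix, κ ∈ ℝ, and let X, P be real n×r matrices satisfying X^T X = I_r and X^T P + P^T X = 0. Define Λ = −X^T A X − P^T P, Ẋ = P − (1+2κ) X P^T X, Ṗ = A X + (1+2κ) P X^T P + X Λ, and Φ = P X^T − X P^T. Then the derivative of Φ along the flow satisfies Ṗ X^T + P Ẋ^T − Ẋ P^T − X Ṗ^T = −[X X^T, A], and the derivative of X X^T along the flow satisfies Ẋ X^T + X Ẋ^T = [Φ, X X^T]. -/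
open Matrix

/-- Along the Neumann flow on the Stiefel variety, the SO(n)-momentum
`Φ = PXᵀ − XPᵀ` satisfies `Φ̇ = −[XXᵀ, A]` and the symmetric matrix `XXᵀ`
satisfies `(XXᵀ)˙ = [Φ, XXᵀ]`. -/
theorem stmt_1 {n r : ℕ} (a : Fin n → ℝ) (κ : ℝ)
    (A : Matrix (Fin n) (Fin n) ℝ) (hA : A = Matrix.diagonal a)
    (X P : Matrix (Fin n) (Fin r) ℝ)
    (hX : Xᵀ * X = 1) (hXP : Xᵀ * P + Pᵀ * X = 0)
    (Λ : Matrix (Fin r) (Fin r) ℝ) (hΛ : Λ = -(Xᵀ * A * X) - Pᵀ * P)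
    (Xd Pd : Matrix (Fin n) (Fin r) ℝ)
    (hXd : Xd = P - (1 + 2 * κ) • (X * Pᵀ * X))
    (hPd : Pd = A * X + (1 + 2 * κ) • (P * Xᵀ * P) + X * Λ)
    (Φ : Matrix (Fin n) (Fin n) ℝ) (hΦ : Φ = P * Xᵀ - X * Pᵀ) :
    Pd * Xᵀ + P * Xdᵀ - Xd * Pᵀ - X * Pdᵀ =
        -((X * Xᵀ) * A - A * (X * Xᵀ)) ∧
      Xd * Xᵀ + X * Xdᵀ = Φ * (X * Xᵀ) - (X * Xᵀ) * Φ := by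
  have hAT : Aᵀ = A := by rw [hA]; exact Matrix.diagonal_transpose a
  have hXtP0 : Xᵀ * P = -(Pᵀ * X) := by
    rw [eq_neg_iff_add_eq_zero]; exact hXP
  have hXtP : ∀ (m : ℕ) (M : Matrix (Fin r) (Fin m) ℝ),
      Xᵀ * (P * M) = -(Pᵀ * (X * M)) := by
    intro m M
    rw [← Matrix.mul_assoc, ← Matrix.mul_assoc, hXtP0, Matrix.neg_mul]
  have hXX : ∀ (m : ℕ) (M : Matrix (Fin r) (Fin m) ℝ),
      Xᵀ * (X * M) = M := by
    intro m M; rw [← Matrix.mul_assoc, hX, Matrix.one_mul]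
  subst hΛ hXd hPd hΦ
  constructor
  · simp only [hAT, Matrix.transpose_add, Matrix.transpose_sub, Matrix.transpose_mul,
      Matrix.transpose_smul, Matrix.transpose_neg, Matrix.transpose_transpose,
      Matrix.add_mul, Matrix.mul_add, Matrix.sub_mul, Matrix.mul_sub,
      Matrix.smul_mul, Matrix.mul_smul, Matrix.neg_mul, Matrix.mul_neg,
      Matrix.mul_assoc, neg_sub, sub_neg_eq_add]
    abel
  · simp only [Matrix.transpose_sub, Matrix.transpose_mul, Matrix.transpose_smul,
      Matrix.transpose_transpose,
      Matrix.add_mul, Matrix.mul_add, Matrix.sub_mul, Matrix.mul_sub,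
      Matrix.smul_mul, Matrix.mul_smul, Matrix.neg_mul, Matrix.mul_neg,
      Matrix.mul_assoc, hXtP, hXX, neg_neg, smul_neg, neg_sub, sub_neg_eq_add]
    abel
end

section
/- Let A = diag(a_1,…,a_n) be a real diagonal n×n matrix, κ ∈ ℝ, and let X, P be real n×r matrices satisfying X^T X = I_r and X^T P + P^T X = 0. Define Λ = −X^T A X − P^T P, Ẋ = P − (1+2κ) X P^T X, Ṗ = A X + (1+2κ) P X^T P + X Λ. Then X^T Ẋ + Ẋ^T X = 0 and Ẋ^T P + X^T Ṗ = 0; in particular, the constraints X^T X = I_r, X^T P + P^T X = 0 and the SO(r)-momentum Ψ = X^T P − P^T X are preserved (have zero derivative) along the Neumann flow. -/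
open Matrix

/-- The Neumann flow on `T*V_{n,r}` is tangent to the constraint manifold
`XᵀX = I`, `XᵀP + PᵀX = 0`, and preserves the SO(r)-momentum
`Ψ = XᵀP − PᵀX`: one has `XᵀẊ + ẊᵀX = 0`, `ẊᵀP + XᵀṖ = 0`, hence the
derivatives of the constraints and of `Ψ` vanish along the flow. -/
theorem stmt_2 {n r : ℕ} (a : Fin n → ℝ) (κ : ℝ)
    (A : Matrix (Fin n) (Fin n) ℝ) (hA : A = Matrix.diagonal a)
    (X P : Matrix (Fin n) (Fin r) ℝ)
    (hX : Xᵀ * X = 1) (hXP : Xᵀ * P + Pᵀ * X = 0)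
    (Λ : Matrix (Fin r) (Fin r) ℝ) (hΛ : Λ = -(Xᵀ * A * X) - Pᵀ * P)
    (Xd Pd : Matrix (Fin n) (Fin r) ℝ)
    (hXd : Xd = P - (1 + 2 * κ) • (X * Pᵀ * X))
    (hPd : Pd = A * X + (1 + 2 * κ) • (P * Xᵀ * P) + X * Λ) :
    Xᵀ * Xd + Xdᵀ * X = 0 ∧
      Xdᵀ * P + Xᵀ * Pd = 0 ∧
      (Xdᵀ * P + Xᵀ * Pd) + (Pdᵀ * X + Pᵀ * Xd) = 0 ∧
      (Xdᵀ * P + Xᵀ * Pd) - (Pdᵀ * X + Pᵀ * Xd) = 0 := by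
  have h1 : Pᵀ * X = -(Xᵀ * P) := eq_neg_of_add_eq_zero_right hXP
  have hXX : ∀ M : Matrix (Fin r) (Fin r) ℝ, Xᵀ * (X * M) = M := fun M => by
    rw [← Matrix.mul_assoc, hX, Matrix.one_mul]
  subst hXd hPd hΛ
  have h2 : Xᵀ * (P - (1 + 2 * κ) • (X * Pᵀ * X)) +
      (P - (1 + 2 * κ) • (X * Pᵀ * X))ᵀ * X = 0 := by
    simp only [transpose_sub, transpose_smul, transpose_mul, transpose_transpose,
      Matrix.mul_sub, Matrix.sub_mul, Matrix.mul_add, Matrix.add_mul,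
      Matrix.mul_smul, Matrix.smul_mul, Matrix.mul_assoc, hX,
      Matrix.mul_one, hXX]
    rw [h1]
    module
  have h3 : (P - (1 + 2 * κ) • (X * Pᵀ * X))ᵀ * P +
      Xᵀ * (A * X + (1 + 2 * κ) • (P * Xᵀ * P) +
        X * (-(Xᵀ * A * X) - Pᵀ * P)) = 0 := by
    simp only [transpose_sub, transpose_smul, transpose_mul, transpose_transpose,
      Matrix.mul_sub, Matrix.sub_mul, Matrix.mul_add, Matrix.add_mul,
      Matrix.mul_neg, Matrix.neg_mul,
      Matrix.mul_smul, Matrix.smul_mul, Matrix.mul_assoc, hX,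
      Matrix.mul_one, hXX]
    module
  have h4 : (A * X + (1 + 2 * κ) • (P * Xᵀ * P) +
        X * (-(Xᵀ * A * X) - Pᵀ * P))ᵀ * X +
      Pᵀ * (P - (1 + 2 * κ) • (X * Pᵀ * X)) = 0 := by
    have := congrArg Matrix.transpose h3
    simpa [Matrix.transpose_add, Matrix.transpose_mul, add_comm] using this
  exact ⟨h2, h3, by rw [h3, h4]; simp, by rw [h3, h4]; simp⟩
end

section
/- Let A = diag(a_1,…,a_n) be a real diagonal n×n matrix, κ ∈ ℝ, and let X, P be real n×r matrices satisfying X^T X = I_r and X^T P + P^T X = 0. Define Λ = −X^T A X − P^T P, Ẋ = P − (1+2κ) X P^T X, Ṗ = A X + (1+2κ) P X^T P + X Λ. For λ ∈ ℝ with λ ≠ a_i for all i, set R = (λ I_n − A)^{−1} and define the 2r×2r matrices L(λ) = [[X^T R P, X^T R X],[I_r − P^T R P, −P^T R X]] and N_κ(λ) = [[(1+2κ) X^T P, I_r],[λ I_r + Λ, −(1+2κ) P^T X]]. Then the derivative of L(λ) along the flow, namely the block matrix [[Ẋ^T R P + X^T R Ṗ, Ẋ^T R X + X^T R Ẋ],[−Ṗ^T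 R P − P^T R Ṗ, −Ṗ^T R X − P^T R Ẋ]], equals the commutator [L(λ), N_κ(λ)]. -/
open Matrix

/-- The 'small' 2r×2r Lax representation of the Neumann systems on the
Stiefel variety: with `R = (λIₙ − A)⁻¹`, the derivative of the block Lax
matrix `L(λ)` along the Neumann flow equals the commutator `[L(λ), N_κ(λ)]`. -/
theorem stmt_3 {n r : ℕ} (a : Fin n → ℝ) (κ : ℝ)
    (A : Matrix (Fin n) (Fin n) ℝ) (hA : A = Matrix.diagonal a)
    (X P : Matrix (Fin n) (Fin r) ℝ)
    (hX : Xᵀ * X = 1) (hXP : Xᵀ * P + Pᵀ * X = 0)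
    (Λ : Matrix (Fin r) (Fin r) ℝ) (hΛ : Λ = -(Xᵀ * A * X) - Pᵀ * P)
    (Xd Pd : Matrix (Fin n) (Fin r) ℝ)
    (hXd : Xd = P - (1 + 2 * κ) • (X * Pᵀ * X))
    (hPd : Pd = A * X + (1 + 2 * κ) • (P * Xᵀ * P) + X * Λ)
    (lam : ℝ) (hlam : ∀ i, lam ≠ a i)
    (R : Matrix (Fin n) (Fin n) ℝ) (hR : R = (lam • (1 : Matrix (Fin n) (Fin n) ℝ) - A)⁻¹)
    (L N : Matrix (Fin r ⊕ Fin r) (Fin r ⊕ Fin r) ℝ)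
    (hL : L = Matrix.fromBlocks (Xᵀ * R * P) (Xᵀ * R * X)
      (1 - Pᵀ * R * P) (-(Pᵀ * R * X)))
    (hN : N = Matrix.fromBlocks ((1 + 2 * κ) • (Xᵀ * P)) 1
      (lam • (1 : Matrix (Fin r) (Fin r) ℝ) + Λ) (-((1 + 2 * κ) • (Pᵀ * X)))) :
    Matrix.fromBlocks (Xdᵀ * R * P + Xᵀ * R * Pd) (Xdᵀ * R * X + Xᵀ * R * Xd)
        (-(Pdᵀ * R * P) - Pᵀ * R * Pd) (-(Pdᵀ * R * X) - Pᵀ * R * Xd) =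
      L * N - N * L := by
  -- basic facts about R
  have hM : lam • (1 : Matrix (Fin n) (Fin n) ℝ) - A = Matrix.diagonal (fun i => lam - a i) := by
    rw [hA]
    ext i j
    by_cases h : i = j <;> simp [Matrix.diagonal, h, Matrix.one_apply]
  have hdet : IsUnit (lam • (1 : Matrix (Fin n) (Fin n) ℝ) - A).det := by
    rw [hM, Matrix.det_diagonal]
    exact (Finset.prod_ne_zero_iff.mpr (fun i _ => sub_ne_zero.mpr (hlam i))).isUnit
  have h1 : R * (lam • (1 : Matrix (Fin n) (Fin n) ℝ) - A) = 1 := by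
    rw [hR]; exact Matrix.nonsing_inv_mul _ hdet
  have h2 : (lam • (1 : Matrix (Fin n) (Fin n) ℝ) - A) * R = 1 := by
    rw [hR]; exact Matrix.mul_nonsing_inv _ hdet
  have hRA : R * A = lam • R - 1 := by
    rw [mul_sub, mul_smul_comm, mul_one] at h1
    linear_combination (norm := abel) -h1
  have hAR : A * R = lam • R - 1 := by
    rw [sub_mul, smul_mul_assoc, one_mul] at h2
    linear_combination (norm := abel) -h2
  have hRT : Rᵀ = R := by
    rw [hR, Matrix.transpose_nonsing_inv]
    congr 1
    rw [hM, Matrix.diagonal_transpose]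
  have hAT : Aᵀ = A := by rw [hA, Matrix.diagonal_transpose]
  have hPX : Pᵀ * X = -(Xᵀ * P) := by
    linear_combination (norm := abel) hXP
  have hX1 : ∀ Y : Matrix (Fin r) (Fin r) ℝ, Xᵀ * (X * Y) = Y := fun Y => by
    rw [← Matrix.mul_assoc, hX, one_mul]
  have hPX1 : ∀ Y : Matrix (Fin r) (Fin r) ℝ, Pᵀ * (X * Y) = -(Xᵀ * (P * Y)) := fun Y => by
    rw [← Matrix.mul_assoc, hPX, ← Matrix.mul_assoc, neg_mul]
  have hRA1 : ∀ Y : Matrix (Fin n) (Fin r) ℝ, R * (A * Y) = lam • (R * Y) - Y := fun Y => by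
    rw [← Matrix.mul_assoc, hRA, Matrix.sub_mul, Matrix.smul_mul, Matrix.one_mul]
  have hAR1 : ∀ Y : Matrix (Fin n) (Fin r) ℝ, A * (R * Y) = lam • (R * Y) - Y := fun Y => by
    rw [← Matrix.mul_assoc, hAR, Matrix.sub_mul, Matrix.smul_mul, Matrix.one_mul]
  subst hL hN hΛ hXd hPd
  simp only [Matrix.fromBlocks_multiply, sub_eq_add_neg, Matrix.fromBlocks_neg,
    Matrix.fromBlocks_add]
  refine Matrix.fromBlocks_inj.mpr ⟨?_, ?_, ?_, ?_⟩ <;>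
  · simp only [transpose_sub, transpose_add, transpose_mul, transpose_smul, transpose_neg,
      transpose_transpose, hRT, hAT]
    simp only [Matrix.mul_assoc, Matrix.mul_add, Matrix.add_mul, Matrix.mul_sub,
      Matrix.sub_mul, Matrix.mul_smul, Matrix.smul_mul, mul_one, one_mul, Matrix.mul_neg,
      Matrix.neg_mul, Matrix.mul_one, Matrix.one_mul]
    simp only [hX1, hPX1, hRA1, hAR1, hX, hPX, Matrix.mul_add, Matrix.add_mul, Matrix.mul_sub,
      Matrix.sub_mul, Matrix.mul_smul, Matrix.smul_mul, Matrix.mul_neg, Matrix.neg_mul,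
      mul_one, one_mul, Matrix.mul_one, Matrix.one_mul, Matrix.mul_assoc]
    module
end

section
/- Let U, V, W be r×r complex matrices and K = [[V, U],[W, −V^T]]. Suppose Ψ is a 2r×r matrix whose columns ψ_1,…,ψ_r are eigenvectors of K with eigenvalues w_1,…,w_r (i.e. K Ψ = Ψ D with D = diag(w_1,…,w_r)), write Ψ = [[Ξ],[Υ]] with Ξ, Υ of size r×r, and assume Ξ is invertible. Then Γ = Υ Ξ^{−1} satisfies Γ U Γ + Γ V + V^T Γ − W = 0. If moreover U and W are symmetric, the w_1,…,w_r are pairwise distinct, and w_i + w_j ≠ 0 for all i, j, then Γ = Υ Ξ^{−1} is symmetric. -/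
open Matrix

/-- Potter's construction: if `Ψ = [[Ξ],[Υ]]` is an eigenmatrix of
`K = [[V,U],[W,−Vᵀ]]` (i.e. `KΨ = Ψ·diag(w)`) with `Ξ` invertible, then
`Γ = ΥΞ⁻¹` solves `ΓUΓ + ΓV + VᵀΓ − W = 0`; if moreover `U, W` are symmetric
and the eigenvalues `w_i` are pairwise distinct with `w_i + w_j ≠ 0`, then
`Γ` is symmetric. -/
theorem stmt_8 {r : ℕ} (U V W : Matrix (Fin r) (Fin r) ℂ)
    (K : Matrix (Fin r ⊕ Fin r) (Fin r ⊕ Fin r) ℂ)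
    (hK : K = Matrix.fromBlocks V U W (-Vᵀ))
    (w : Fin r → ℂ) (Ξ Υ : Matrix (Fin r) (Fin r) ℂ)
    (hΨ : K * Matrix.fromRows Ξ Υ = Matrix.fromRows Ξ Υ * Matrix.diagonal w)
    (hΞ : IsUnit Ξ)
    (Γ : Matrix (Fin r) (Fin r) ℂ) (hΓ : Γ = Υ * Ξ⁻¹) :
    Γ * U * Γ + Γ * V + Vᵀ * Γ - W = 0 ∧
      (Uᵀ = U → Wᵀ = W → Function.Injective w →
        (∀ i j, w i + w j ≠ 0) → Γᵀ = Γ) := by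
  set D : Matrix (Fin r) (Fin r) ℂ := Matrix.diagonal w with hD
  rw [hK, Matrix.fromBlocks_mul_fromRows, Matrix.fromRows_mul] at hΨ
  rw [Matrix.fromRows_inj.eq_iff] at hΨ
  obtain ⟨h1, h2⟩ := hΨ
  -- h1 : V * Ξ + U * Υ = Ξ * D
  -- h2 : W * Ξ + (-Vᵀ) * Υ = Υ * D
  have hdet : IsUnit Ξ.det := (Matrix.isUnit_iff_isUnit_det Ξ).mp hΞ
  have hΞΞ : Ξ * Ξ⁻¹ = 1 := Matrix.mul_nonsing_inv Ξ hdet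
  have hΞΞ' : Ξ⁻¹ * Ξ = 1 := Matrix.nonsing_inv_mul Ξ hdet
  have hΓΞ : Γ * Ξ = Υ := by
    rw [hΓ, Matrix.mul_assoc, hΞΞ', Matrix.mul_one]
  have key : (Γ * U * Γ + Γ * V + Vᵀ * Γ - W) * Ξ = 0 := by
    have : (Γ * U * Γ + Γ * V + Vᵀ * Γ - W) * Ξ
        = Γ * (V * Ξ + U * Υ) + (Vᵀ * Υ - W * Ξ) := by
      rw [Matrix.sub_mul, Matrix.add_mul, Matrix.add_mul, Matrix.mul_assoc (Γ * U) Γ Ξ,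
        hΓΞ, Matrix.mul_assoc Vᵀ Γ Ξ, hΓΞ, Matrix.mul_add, Matrix.mul_assoc Γ U Υ,
        Matrix.mul_assoc Γ V Ξ]
      abel
    rw [this, h1]
    have h2' : Vᵀ * Υ - W * Ξ = -(Υ * D) := by
      rw [← h2]; simp [Matrix.neg_mul]; abel
    rw [h2', ← hΓΞ, Matrix.mul_assoc]
    abel
  constructor
  · have := congrArg (· * Ξ⁻¹) key
    simpa [Matrix.mul_assoc, hΞΞ] using this
  · intro hU hW _ hsum
    -- M = ΞᵀΥ - ΥᵀΞ satisfies D*M + M*D = 0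
    set M : Matrix (Fin r) (Fin r) ℂ := Ξᵀ * Υ - Υᵀ * Ξ with hM
    have h1t : Ξᵀ * Vᵀ + Υᵀ * U = D * Ξᵀ := by
      have := congrArg Matrix.transpose h1
      simpa [Matrix.transpose_mul, Matrix.transpose_add, hU, hD,
        Matrix.diagonal_transpose] using this
    have h2t : Ξᵀ * W - Υᵀ * V = D * Υᵀ := by
      have := congrArg Matrix.transpose h2
      simpa [Matrix.transpose_mul, Matrix.transpose_add, hW, hD, sub_eq_add_neg,
        Matrix.transpose_neg, Matrix.neg_mul, Matrix.mul_neg,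
        Matrix.diagonal_transpose] using this
    have hMD : M * D = - (D * M) := by
      have e1 : Ξᵀ * Υ * D = Ξᵀ * W * Ξ - D * Ξᵀ * Υ + Υᵀ * U * Υ := by
        calc Ξᵀ * Υ * D = Ξᵀ * (Υ * D) := by rw [Matrix.mul_assoc]
          _ = Ξᵀ * (W * Ξ + (-Vᵀ) * Υ) := by rw [h2]
          _ = Ξᵀ * W * Ξ - Ξᵀ * Vᵀ * Υ := by
              simp [Matrix.mul_add, Matrix.neg_mul, Matrix.mul_neg, Matrix.mul_assoc,
                sub_eq_add_neg]
          _ = Ξᵀ * W * Ξ - (D * Ξᵀ - Υᵀ * U) * Υ := by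
              rw [show Ξᵀ * Vᵀ = D * Ξᵀ - Υᵀ * U from by rw [← h1t]; abel]
          _ = Ξᵀ * W * Ξ - D * Ξᵀ * Υ + Υᵀ * U * Υ := by
              rw [Matrix.sub_mul]; abel
      have e2 : Υᵀ * Ξ * D = Ξᵀ * W * Ξ - D * Υᵀ * Ξ + Υᵀ * U * Υ := by
        calc Υᵀ * Ξ * D = Υᵀ * (Ξ * D) := by rw [Matrix.mul_assoc]
          _ = Υᵀ * (V * Ξ + U * Υ) := by rw [h1]
          _ = Υᵀ * V * Ξ + Υᵀ * U * Υ := by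
              simp [Matrix.mul_add, Matrix.mul_assoc]
          _ = (Ξᵀ * W - D * Υᵀ) * Ξ + Υᵀ * U * Υ := by
              rw [show Υᵀ * V = Ξᵀ * W - D * Υᵀ from by rw [← h2t]; abel]
          _ = Ξᵀ * W * Ξ - D * Υᵀ * Ξ + Υᵀ * U * Υ := by
              rw [Matrix.sub_mul]
      rw [hM, Matrix.sub_mul, e1, e2, Matrix.mul_sub]
      simp only [Matrix.mul_assoc]
      abel
    have hM0 : M = 0 := by
      ext i j
      have := congrFun (congrFun (by rw [hMD]; abel : M * D + D * M = 0) i) j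
      simp only [hD, Matrix.add_apply, Matrix.mul_diagonal, Matrix.diagonal_mul,
        Matrix.zero_apply] at this
      have h : M i j * (w j + w i) = 0 := by ring_nf; ring_nf at this; linear_combination this
      rcases mul_eq_zero.mp h with h' | h'
      · simpa using h'
      · exact absurd h' (by simpa [add_comm] using hsum i j)
    have hsym : Ξᵀ * Υ = Υᵀ * Ξ := by
      have := sub_eq_zero.mp (hM ▸ hM0)
      exact this
    have hΞtdet : IsUnit Ξᵀ.det := by simpa using hdet
    have hΞt : (Ξᵀ)⁻¹ * Ξᵀ = 1 := Matrix.nonsing_inv_mul _ hΞtdet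
    rw [hΓ, Matrix.transpose_mul, Matrix.transpose_nonsing_inv]
    calc (Ξᵀ)⁻¹ * Υᵀ = (Ξᵀ)⁻¹ * (Υᵀ * Ξ) * Ξ⁻¹ := by
          simp [Matrix.mul_assoc, hΞΞ]
      _ = (Ξᵀ)⁻¹ * (Ξᵀ * Υ) * Ξ⁻¹ := by rw [hsym]
      _ = Υ * Ξ⁻¹ := by simp [← Matrix.mul_assoc, hΞt]
end

section
/- Let U, V, W be r×r complex matrices with U and W symmetric, and K = [[V, U],[W, −V^T]]. Assume K has 2r pairwise distinct eigenvalues. If a symmetric r×r matrix Γ satisfies Γ U Γ + Γ V + V^T Γ − W = 0, then there exist eigenvectors ψ_1,…,ψ_r of K with eigenvalues w_1,…,w_r, pairwise distinct and satisfying w_i + w_j ≠ 0 for all i, j, such that, writing Ψ = (ψ_1 ⋯ ψ_r) = [[Ξ],[Υ]] with r×r blocks, the matrix Ξ is invertible and Γ = Υ Ξ^{−1}. -/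
open Matrix

/-- If `diagonal d * C = C * M`, then for any finite set `s` of indices the diagonal
matrix with entries `∏ m in s, (d j - d m)` also intertwines `C` with some matrix. -/
private lemma diag_prod_comm {n' : Type*} [Fintype n'] [DecidableEq n'] {r : ℕ}
    (d : n' → ℂ) (C : Matrix n' (Fin r) ℂ) (M : Matrix (Fin r) (Fin r) ℂ)
    (hDC : Matrix.diagonal d * C = C * M) (s : Finset n') :
    ∃ N : Matrix (Fin r) (Fin r) ℂ,
      Matrix.diagonal (fun j => ∏ m ∈ s, (d j - d m)) * C = C * N := by
  classical
  induction s using Finset.induction_on with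
  | empty => exact ⟨1, by simp⟩
  | @insert a s ha ih =>
    obtain ⟨N, hN⟩ := ih
    refine ⟨(M - d a • 1) * N, ?_⟩
    have h1 : (Matrix.diagonal fun j => ∏ m ∈ insert a s, (d j - d m)) =
        (Matrix.diagonal fun j => (d j - d a)) *
          Matrix.diagonal (fun j => ∏ m ∈ s, (d j - d m)) := by
      rw [Matrix.diagonal_mul_diagonal]
      exact congrArg Matrix.diagonal (funext fun j => Finset.prod_insert ha)
    have h2 : (Matrix.diagonal fun j => (d j - d a)) = Matrix.diagonal d - d a • 1 := by
      ext i j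
      by_cases h : i = j
      · subst h; simp
      · simp [Matrix.diagonal_apply_ne _ h, Matrix.one_apply_ne h]
    have h3 : (Matrix.diagonal d - d a • 1) * C = C * (M - d a • 1) := by
      rw [Matrix.sub_mul, Matrix.mul_sub, hDC, Matrix.smul_mul, Matrix.mul_smul,
        Matrix.one_mul, Matrix.mul_one]
    rw [h1, h2, Matrix.mul_assoc, hN, ← Matrix.mul_assoc, h3, Matrix.mul_assoc]

/-- If `diagonal d * C = C * M` with `d` injective and row `k` of `C` is nonzero, then the
standard basis vector `e_k` lies in the column space of `C`. -/
private lemma single_mem_range {n' : Type*} [Fintype n'] [DecidableEq n'] {r : ℕ}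
    (d : n' → ℂ) (hd : Function.Injective d) (C : Matrix n' (Fin r) ℂ)
    (M : Matrix (Fin r) (Fin r) ℂ) (hDC : Matrix.diagonal d * C = C * M)
    (k : n') (hk : C k ≠ 0) :
    ∃ x : Fin r → ℂ, C *ᵥ x = Pi.single k 1 := by
  classical
  obtain ⟨i₀, hi₀⟩ : ∃ i, C k i ≠ 0 := by
    by_contra h
    push_neg at h
    exact hk (funext h)
  obtain ⟨N, hN⟩ := diag_prod_comm d C M hDC (Finset.univ.erase k)
  set g : n' → ℂ := fun j => ∏ m ∈ Finset.univ.erase k, (d j - d m) with hg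
  have hgk : g k ≠ 0 := by
    apply Finset.prod_ne_zero_iff.mpr
    intro m hm
    have hmk : m ≠ k := (Finset.mem_erase.mp hm).1
    exact sub_ne_zero.mpr fun h => hmk (hd h).symm
  have hgj : ∀ j, j ≠ k → g j = 0 := by
    intro j hj
    exact Finset.prod_eq_zero (Finset.mem_erase.mpr ⟨hj, Finset.mem_univ j⟩) (sub_self _)
  refine ⟨(g k * C k i₀)⁻¹ • (fun j => N j i₀), ?_⟩
  have hmv : C *ᵥ (fun j => N j i₀) = fun j => g j * C j i₀ := by
    funext j
    have h1 : (C *ᵥ fun j' => N j' i₀) j = (C * N) j i₀ := by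
      simp [Matrix.mulVec, Matrix.mul_apply, dotProduct]
    rw [h1, ← hN, Matrix.diagonal_mul]
  rw [Matrix.mulVec_smul, hmv]
  funext j
  by_cases hjk : j = k
  · subst hjk
    simp only [Pi.smul_apply, smul_eq_mul, Pi.single_eq_same]
    exact inv_mul_cancel₀ (mul_ne_zero hgk hi₀)
  · simp [hgj j hjk, Pi.single_eq_of_ne hjk]

open Classical in
/-- Counting: if `C` is injective as a linear map and every nonzero row index contributes a
standard basis vector to the column space, then the number of nonzero rows is exactly `r`. -/
private lemma card_nonzero_rows {n' : Type*} [Fintype n'] [DecidableEq n'] {r : ℕ}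
    (C : Matrix n' (Fin r) ℂ) (hinj : Function.Injective C.mulVec)
    (hx : ∀ k : n', C k ≠ 0 → ∃ x, C *ᵥ x = Pi.single k 1) :
    Fintype.card {k : n' // C k ≠ 0} = r := by
  classical
  choose xv hxv using fun (t : {k : n' // C k ≠ 0}) => hx t t.2
  let L : (Fin r → ℂ) →ₗ[ℂ] ({k : n' // C k ≠ 0} → ℂ) :=
    (LinearMap.funLeft ℂ ℂ (fun t : {k : n' // C k ≠ 0} => (t : n'))).comp C.mulVecLin
  have hLapp : ∀ (x : Fin r → ℂ) (t : {k : n' // C k ≠ 0}), L x t = (C *ᵥ x) (t : n') :=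
    fun x t => rfl
  have hLinj : Function.Injective L := by
    intro x y h
    apply hinj
    funext k
    by_cases hk : C k ≠ 0
    · exact congrFun h ⟨k, hk⟩
    · have hk0 : C k = 0 := not_not.mp hk
      show (fun j => C k j) ⬝ᵥ x = (fun j => C k j) ⬝ᵥ y
      simp [hk0]
  have hLsurj : Function.Surjective L := by
    intro y
    refine ⟨∑ t : {k : n' // C k ≠ 0}, y t • xv t, ?_⟩
    have h1 : L (∑ t : {k : n' // C k ≠ 0}, y t • xv t)
        = ∑ t : {k : n' // C k ≠ 0}, y t • L (xv t) := by
      rw [map_sum]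
      simp_rw [_root_.map_smul]
    rw [h1]
    funext s
    rw [Finset.sum_apply]
    have h2 : ∀ t : {k : n' // C k ≠ 0},
        (y t • L (xv t)) s = y t * (if s = t then 1 else 0) := by
      intro t
      rw [Pi.smul_apply, smul_eq_mul, hLapp, hxv t, Pi.single_apply]
      congr 1
      simp [Subtype.ext_iff]
    simp_rw [h2]
    simp
  have hfr := LinearEquiv.finrank_eq (LinearEquiv.ofBijective L ⟨hLinj, hLsurj⟩)
  simpa using hfr.symm

/-- Potter's theorem (Proposition quad_sol): if `K = [[V,U],[W,−Vᵀ]]` (with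
`U, W` symmetric) has `2r` pairwise distinct eigenvalues, then every symmetric
solution `Γ` of `ΓUΓ + ΓV + VᵀΓ − W = 0` has the form `Γ = ΥΞ⁻¹` for a
non-special eigenmatrix `[[Ξ],[Υ]]` of `K` (eigenvectors with pairwise
distinct eigenvalues `w_i` satisfying `w_i + w_j ≠ 0`). -/
theorem stmt_9 {r : ℕ} (U V W : Matrix (Fin r) (Fin r) ℂ)
    (hU : Uᵀ = U) (hW : Wᵀ = W)
    (K : Matrix (Fin r ⊕ Fin r) (Fin r ⊕ Fin r) ℂ)
    (hK : K = Matrix.fromBlocks V U W (-Vᵀ))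
    (hdiag : ∃ (Q : Matrix (Fin r ⊕ Fin r) (Fin r ⊕ Fin r) ℂ)
        (d : Fin r ⊕ Fin r → ℂ),
      IsUnit Q ∧ Function.Injective d ∧ K = Q * Matrix.diagonal d * Q⁻¹)
    (Γ : Matrix (Fin r) (Fin r) ℂ) (hΓsym : Γᵀ = Γ)
    (hΓ : Γ * U * Γ + Γ * V + Vᵀ * Γ - W = 0) :
    ∃ (w : Fin r → ℂ) (Ξ Υ : Matrix (Fin r) (Fin r) ℂ),
      Function.Injective w ∧ (∀ i j, w i + w j ≠ 0) ∧
      K * Matrix.fromRows Ξ Υ = Matrix.fromRows Ξ Υ * Matrix.diagonal w ∧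
      IsUnit Ξ ∧ Γ = Υ * Ξ⁻¹ := by
  classical
  obtain ⟨Q, d, hQ, hd, hKQ⟩ := hdiag
  have hQdet : IsUnit Q.det := (Matrix.isUnit_iff_isUnit_det Q).mp hQ
  set Ψ₀ : Matrix (Fin r ⊕ Fin r) (Fin r) ℂ := Matrix.fromRows 1 Γ with hΨ₀
  set M : Matrix (Fin r) (Fin r) ℂ := V + U * Γ with hM
  -- the graph of `Γ` is `K`-invariant
  have hWeq : W = Γ * U * Γ + Γ * V + Vᵀ * Γ := (sub_eq_zero.mp hΓ).symm
  have hKΨ₀ : K * Ψ₀ = Ψ₀ * M := by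
    rw [hK, hΨ₀, Matrix.fromBlocks_mul_fromRows, Matrix.fromRows_mul]
    have htop : V * 1 + U * Γ = 1 * M := by
      rw [Matrix.mul_one, Matrix.one_mul, hM]
    have hbot : W * 1 + -Vᵀ * Γ = Γ * M := by
      rw [Matrix.mul_one, hM, hWeq]
      noncomm_ring
    rw [htop, hbot]
  have hKQ2 : K * Q = Q * Matrix.diagonal d := by
    rw [hKQ, Matrix.mul_assoc, Matrix.nonsing_inv_mul _ hQdet, Matrix.mul_one]
  set C : Matrix (Fin r ⊕ Fin r) (Fin r) ℂ := Q⁻¹ * Ψ₀ with hC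
  have hQC : Q * C = Ψ₀ := by
    rw [hC, ← Matrix.mul_assoc, Matrix.mul_nonsing_inv _ hQdet, Matrix.one_mul]
  have hDC : Matrix.diagonal d * C = C * M := by
    have h2 : Q * (Matrix.diagonal d * C) = Q * (C * M) := by
      calc Q * (Matrix.diagonal d * C) = (Q * Matrix.diagonal d) * C := by
            rw [Matrix.mul_assoc]
        _ = (K * Q) * C := by rw [hKQ2]
        _ = K * (Q * C) := by rw [Matrix.mul_assoc]
        _ = Ψ₀ * M := by rw [hQC, hKΨ₀]
        _ = (Q * C) * M := by rw [hQC]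
        _ = Q * (C * M) := by rw [Matrix.mul_assoc]
    calc Matrix.diagonal d * C = (Q⁻¹ * Q) * (Matrix.diagonal d * C) := by
          rw [Matrix.nonsing_inv_mul _ hQdet, Matrix.one_mul]
      _ = Q⁻¹ * (Q * (Matrix.diagonal d * C)) := by rw [Matrix.mul_assoc]
      _ = Q⁻¹ * (Q * (C * M)) := by rw [h2]
      _ = (Q⁻¹ * Q) * (C * M) := by rw [← Matrix.mul_assoc]
      _ = C * M := by rw [Matrix.nonsing_inv_mul _ hQdet, Matrix.one_mul]
  have hCinj : Function.Injective C.mulVec := by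
    intro x y hxy
    have h1 : Ψ₀ *ᵥ x = Ψ₀ *ᵥ y := by
      have h0 := congrArg (fun v => Q *ᵥ v) hxy
      simpa only [Matrix.mulVec_mulVec, hQC] using h0
    funext i
    have h2 := congrFun h1 (Sum.inl i)
    simpa [hΨ₀, Matrix.fromRows_mulVec, Matrix.one_mulVec] using h2
  have hq : ∀ k : Fin r ⊕ Fin r, C k ≠ 0 → ∃ x, C *ᵥ x = Pi.single k 1 :=
    fun k hk => single_mem_range d hd C M hDC k hk
  choose xv hxv using fun (t : {k : Fin r ⊕ Fin r // C k ≠ 0}) => hq t t.2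
  have hcard := card_nonzero_rows C hCinj hq
  obtain σ : Fin r ≃ {k : Fin r ⊕ Fin r // C k ≠ 0} :=
    (Fintype.equivFinOfCardEq (by convert hcard)).symm
  set f : Fin r → Fin r ⊕ Fin r := fun i => (σ i : Fin r ⊕ Fin r) with hf
  have hfinj : Function.Injective f := fun i j h => σ.injective (Subtype.ext h)
  set w : Fin r → ℂ := fun i => d (f i) with hw
  set Ξ : Matrix (Fin r) (Fin r) ℂ := Matrix.of (fun j i => xv (σ i) j) with hΞ
  set Υ : Matrix (Fin r) (Fin r) ℂ := Γ * Ξ with hΥ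
  -- columns of `Q` as eigenvectors
  have hq_col : ∀ m, (fun a => Q a m) = Q *ᵥ Pi.single m 1 := by
    intro m
    funext a
    simp [Matrix.mulVec_single]
  have hq_eig : ∀ m, K *ᵥ (fun a => Q a m) = d m • (fun a => Q a m) := by
    intro m
    funext a
    have h1 : (K *ᵥ fun b => Q b m) a = (K * Q) a m := by
      simp [Matrix.mulVec, Matrix.mul_apply, dotProduct]
    rw [h1, hKQ2, Matrix.mul_diagonal]
    simp [mul_comm]
  -- the columns of `Ψ₀ * Ξ` are the chosen eigenvector columns of `Q`
  have hΨΞ : Ψ₀ * Ξ = Q.submatrix id f := by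
    ext a i
    have h1 : (Ψ₀ * Ξ) a i = (Ψ₀ *ᵥ (xv (σ i))) a := by
      simp [Matrix.mul_apply, Matrix.mulVec, dotProduct, hΞ]
    have h2 : Ψ₀ *ᵥ (xv (σ i)) = Q *ᵥ (C *ᵥ xv (σ i)) := by
      rw [Matrix.mulVec_mulVec, hQC]
    rw [h1, h2, hxv]
    simp [Matrix.mulVec_single, Matrix.submatrix_apply, hf]
  have hfromRows : Matrix.fromRows Ξ Υ = Ψ₀ * Ξ := by
    rw [hΨ₀, Matrix.fromRows_mul, Matrix.one_mul, hΥ]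
  -- eigen-equation for the eigenmatrix
  have hKeig : K * (Ψ₀ * Ξ) = (Ψ₀ * Ξ) * Matrix.diagonal w := by
    rw [hΨΞ]
    ext a i
    have h1 : (K * Q.submatrix id f) a i = (K * Q) a (f i) := by
      simp [Matrix.mul_apply, Matrix.submatrix_apply]
    rw [h1, hKQ2, Matrix.mul_diagonal, Matrix.mul_diagonal, Matrix.submatrix_apply]
    rfl
  -- `Ξ` is invertible, with explicit left inverse
  have hΞunit : IsUnit Ξ := by
    refine (Matrix.isUnit_iff_isUnit_det Ξ).mpr
      (Matrix.isUnit_det_of_left_inverse (B := C.submatrix f id) ?_)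
    ext i i'
    have h1 : (C.submatrix f id * Ξ) i i' = (C *ᵥ (xv (σ i'))) (f i) := by
      simp [Matrix.mul_apply, Matrix.mulVec, dotProduct, Matrix.submatrix_apply, hΞ]
    rw [h1, hxv, Pi.single_apply, Matrix.one_apply]
    simp [hfinj.eq_iff, eq_comm]
    exact if_congr ⟨fun h => by subst h; rfl, fun h => (hfinj (a₁ := i') (a₂ := i) h).symm⟩ rfl rfl
  have hwinj : Function.Injective w := fun i j h => hfinj (hd h)
  -- the symplectic form
  set J : Matrix (Fin r ⊕ Fin r) (Fin r ⊕ Fin r) ℂ :=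
    Matrix.fromBlocks 0 1 (-1) 0 with hJ
  have hJJ : J * (-J) = 1 := by
    rw [hJ]
    ext a b
    rcases a with a | a <;> rcases b with b | b <;>
      simp [Matrix.fromBlocks_multiply, Matrix.one_apply]
  have hKJ : Kᵀ * J = -(J * K) := by
    rw [hK, hJ, Matrix.fromBlocks_transpose, Matrix.fromBlocks_multiply,
      Matrix.fromBlocks_multiply]
    ext a b
    rcases a with a | a <;> rcases b with b | b <;>
      simp [hU, hW]
  have hiso : Ψ₀ᵀ * (J * Ψ₀) = 0 := by
    rw [hΨ₀, hJ, Matrix.transpose_fromRows, Matrix.fromBlocks_mul_fromRows,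
      Matrix.fromCols_mul_fromRows]
    simp [hΓsym]
  -- isotropy of the graph subspace
  have hiso' : ∀ x y : Fin r → ℂ, (Ψ₀ *ᵥ x) ⬝ᵥ (J *ᵥ (Ψ₀ *ᵥ y)) = 0 := by
    intro x y
    rw [Matrix.mulVec_mulVec, Matrix.dotProduct_mulVec]
    have h1 : (Ψ₀ *ᵥ x) ᵥ* (J * Ψ₀) = 0 := by
      rw [← Matrix.vecMul_transpose, Matrix.vecMul_vecMul, hiso, Matrix.vecMul_zero]
    rw [h1, zero_dotProduct]
  -- pairing identity for eigenvectors
  have hpair : ∀ k m : Fin r ⊕ Fin r,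
      (d k + d m) * ((fun a => Q a k) ⬝ᵥ (J *ᵥ (fun a => Q a m))) = 0 := by
    intro k m
    have h2 : (fun a => Q a k) ⬝ᵥ (J *ᵥ (K *ᵥ (fun a => Q a m)))
        = d m * ((fun a => Q a k) ⬝ᵥ (J *ᵥ (fun a => Q a m))) := by
      rw [hq_eig m, Matrix.mulVec_smul, dotProduct_smul, smul_eq_mul]
    have h3 : (fun a => Q a k) ⬝ᵥ (J *ᵥ (K *ᵥ (fun a => Q a m)))
        = -(d k * ((fun a => Q a k) ⬝ᵥ (J *ᵥ (fun a => Q a m)))) := by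
      rw [Matrix.mulVec_mulVec]
      have h4 : J * K = -(Kᵀ * J) := by rw [hKJ, neg_neg]
      rw [h4, Matrix.neg_mulVec, dotProduct_neg, ← Matrix.mulVec_mulVec,
        Matrix.dotProduct_mulVec, ← Matrix.mulVec_transpose, Matrix.transpose_transpose,
        hq_eig k, smul_dotProduct, smul_eq_mul]
    have h5 := h2.symm.trans h3
    linear_combination h5
  -- non-speciality of the chosen eigenvalues
  have hspec : ∀ i j, w i + w j ≠ 0 := by
    intro i j h0
    -- all pairings of column `f i` vanish
    have hall : ∀ m, (fun a => Q a (f i)) ⬝ᵥ (J *ᵥ (fun a => Q a m)) = 0 := by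
      intro m
      by_cases hm : m = f j
      · subst hm
        have h1 : (fun a => Q a (f i)) = Ψ₀ *ᵥ xv (σ i) := by
          rw [← hQC, ← Matrix.mulVec_mulVec, hxv, hq_col]
        have h2 : (fun a => Q a (f j)) = Ψ₀ *ᵥ xv (σ j) := by
          rw [← hQC, ← Matrix.mulVec_mulVec, hxv, hq_col]
        rw [h1, h2]
        exact hiso' _ _
      · have hdm : d (f i) + d m ≠ 0 := by
          intro hc
          apply hm
          apply hd
          have hwi : w i = d (f i) := rfl
          have hwj : w j = d (f j) := rfl
          rw [hwi, hwj] at h0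
          linear_combination hc - h0
        exact (mul_eq_zero.mp (hpair (f i) m)).resolve_left hdm
    -- hence the row vector `q_{f i}ᵀ J` annihilates all of `Q`
    have hrowQ : ((fun a => Q a (f i)) ᵥ* J) ᵥ* Q = 0 := by
      funext m
      have h1 : (((fun a => Q a (f i)) ᵥ* J) ᵥ* Q) m
          = ((fun a => Q a (f i)) ᵥ* J) ⬝ᵥ (fun a => Q a m) := rfl
      rw [h1, ← Matrix.dotProduct_mulVec, hall m]
      rfl
    have hrow : (fun a => Q a (f i)) ᵥ* J = 0 := by
      calc (fun a => Q a (f i)) ᵥ* J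
          = (((fun a => Q a (f i)) ᵥ* J) ᵥ* Q) ᵥ* Q⁻¹ := by
            rw [Matrix.vecMul_vecMul, Matrix.mul_nonsing_inv _ hQdet, Matrix.vecMul_one]
        _ = 0 := by rw [hrowQ, Matrix.zero_vecMul]
    have hqk0 : (fun a => Q a (f i)) = 0 := by
      calc (fun a => Q a (f i)) = ((fun a => Q a (f i)) ᵥ* J) ᵥ* (-J) := by
            rw [Matrix.vecMul_vecMul, hJJ, Matrix.vecMul_one]
        _ = 0 := by rw [hrow, Matrix.zero_vecMul]
    have hsk : (Pi.single (f i) 1 : (Fin r ⊕ Fin r) → ℂ) = 0 := by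
      have h1 : Q *ᵥ Pi.single (f i) 1 = 0 := by rw [← hq_col, hqk0]
      have h2 := congrArg (fun v => Q⁻¹ *ᵥ v) h1
      simpa only [Matrix.mulVec_mulVec, Matrix.nonsing_inv_mul _ hQdet,
        Matrix.one_mulVec, Matrix.mulVec_zero] using h2
    have := congrFun hsk (f i)
    simp at this
  refine ⟨w, Ξ, Υ, hwinj, hspec, ?_, hΞunit, ?_⟩
  · rw [hfromRows]
    exact hKeig
  · rw [hΥ, Matrix.mul_assoc,
      Matrix.mul_nonsing_inv _ ((Matrix.isUnit_iff_isUnit_det Ξ).mp hΞunit), Matrix.mul_one]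
end

section
/- Let A = diag(a_1,…,a_n) be a real diagonal matrix, λ* ∈ ℝ with λ* > a_i for all i, and B = diag(√(λ*−a_1),…,√(λ*−a_n)). Let X, X̃ be real n×r matrices with X^T X = X̃^T X̃ = I_r, set Γ = ½(X̃^T B X + X^T B X̃), P = B X̃ − X Γ, and P̃ = −B X + X̃ Γ. Then for every λ ∈ ℝ with λ ≠ a_i for all i, the intertwining relation L̃(λ) M(λ, λ*) = M(λ, λ*) L(λ) holds, where L(λ) = [[X^T R P, X^T R X],[I_r − P^T R P, −P^T R X]] with R = (λ I_n − A)^{−1}, L̃(λ) is the same expression with (X, P) replaced by (X̃, P̃), and M(λ, λ*) = [[−Γ, I_r],[(λ − λ*) I_r + Γ², −Γ]]. -/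
open Matrix

/-- The discrete Lax pair of the discrete Neumann system on the Stiefel
variety: `L̃(λ) M(λ, λ*) = M(λ, λ*) L(λ)`, with
`M(λ, λ*) = [[−Γ, I],[(λ−λ*)I + Γ², −Γ]]`. -/
theorem stmt_10 {n r : ℕ} (a : Fin n → ℝ) (lams : ℝ) (hlams : ∀ i, a i < lams)
    (A B : Matrix (Fin n) (Fin n) ℝ)
    (hA : A = Matrix.diagonal a)
    (hB : B = Matrix.diagonal fun i => Real.sqrt (lams - a i))
    (X Xt : Matrix (Fin n) (Fin r) ℝ) (hX : Xᵀ * X = 1) (hXt : Xtᵀ * Xt = 1)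
    (Γ : Matrix (Fin r) (Fin r) ℝ)
    (hΓ : Γ = (1 / 2 : ℝ) • (Xtᵀ * B * X + Xᵀ * B * Xt))
    (P Pt : Matrix (Fin n) (Fin r) ℝ)
    (hP : P = B * Xt - X * Γ) (hPt : Pt = -(B * X) + Xt * Γ) :
    ∀ lam : ℝ, (∀ i, lam ≠ a i) →
      ∀ R : Matrix (Fin n) (Fin n) ℝ,
        R = (lam • (1 : Matrix (Fin n) (Fin n) ℝ) - A)⁻¹ →
      Matrix.fromBlocks (Xtᵀ * R * Pt) (Xtᵀ * R * Xt)
          (1 - Ptᵀ * R * Pt) (-(Ptᵀ * R * Xt)) *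
        Matrix.fromBlocks (-Γ) 1
          ((lam - lams) • (1 : Matrix (Fin r) (Fin r) ℝ) + Γ * Γ) (-Γ) =
      Matrix.fromBlocks (-Γ) 1
          ((lam - lams) • (1 : Matrix (Fin r) (Fin r) ℝ) + Γ * Γ) (-Γ) *
        Matrix.fromBlocks (Xᵀ * R * P) (Xᵀ * R * X)
          (1 - Pᵀ * R * P) (-(Pᵀ * R * X)) := by
  intro lam hlam R hR
  have hBsym : Bᵀ = B := by rw [hB, diagonal_transpose]
  have hΓs : Γᵀ = Γ := by
    rw [hΓ, transpose_smul, transpose_add, transpose_mul, transpose_mul, transpose_mul,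
      transpose_mul, transpose_transpose, transpose_transpose, hBsym, Matrix.mul_assoc,
      Matrix.mul_assoc, add_comm, ← Matrix.mul_assoc, ← Matrix.mul_assoc]
  have hdiagR : R = diagonal (fun i => (lam - a i)⁻¹) := by
    have h1 : lam • (1 : Matrix (Fin n) (Fin n) ℝ) - A = diagonal (fun i => lam - a i) := by
      rw [hA]; ext i j; by_cases h : i = j <;> simp [diagonal, one_apply, h]
    rw [hR, h1]
    apply Matrix.inv_eq_right_inv
    rw [diagonal_mul_diagonal, ← diagonal_one]
    exact congrArg diagonal (funext fun i => mul_inv_cancel₀ (sub_ne_zero.mpr (hlam i)))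
  have hBR : B * R = R * B := by
    rw [hdiagR, hB, diagonal_mul_diagonal, diagonal_mul_diagonal]
    exact congrArg diagonal (funext fun i => mul_comm _ _)
  have hRBB : R * (B * B) = 1 - (lam - lams) • R := by
    rw [hdiagR, hB, diagonal_mul_diagonal, diagonal_mul_diagonal, ← diagonal_one,
      ← diagonal_smul, diagonal_sub]
    refine congrArg diagonal (funext fun i => ?_)
    have h1 : lam - a i ≠ 0 := sub_ne_zero.mpr (hlam i)
    have h2 : Real.sqrt (lams - a i) * Real.sqrt (lams - a i) = lams - a i :=
      Real.mul_self_sqrt (by linarith [hlams i])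
    simp only [Pi.sub_apply, Pi.one_apply, Pi.smul_apply, smul_eq_mul, h2]
    field_simp
    ring
  have cBR : ∀ (z : Matrix (Fin n) (Fin r) ℝ), B * (R * z) = R * (B * z) := fun z => by
    rw [← Matrix.mul_assoc, hBR, Matrix.mul_assoc]
  have cRBB : ∀ (z : Matrix (Fin n) (Fin r) ℝ),
      R * (B * (B * z)) = z - (lam - lams) • (R * z) := fun z => by
    rw [← Matrix.mul_assoc, ← Matrix.mul_assoc, Matrix.mul_assoc R B B, hRBB,
      Matrix.sub_mul, Matrix.one_mul, Matrix.smul_mul]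
  have cXX : ∀ (z : Matrix (Fin r) (Fin r) ℝ), Xᵀ * (X * z) = z := fun z => by
    rw [← Matrix.mul_assoc, hX, Matrix.one_mul]
  have cXtXt : ∀ (z : Matrix (Fin r) (Fin r) ℝ), Xtᵀ * (Xt * z) = z := fun z => by
    rw [← Matrix.mul_assoc, hXt, Matrix.one_mul]
  subst hP hPt
  rw [Matrix.fromBlocks_multiply, Matrix.fromBlocks_multiply, Matrix.fromBlocks_inj]
  refine ⟨?_, ?_, ?_, ?_⟩ <;>
  · simp only [transpose_sub, transpose_add, transpose_neg, transpose_mul, hBsym, hΓs,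
      Matrix.mul_add, Matrix.add_mul, Matrix.mul_sub, Matrix.sub_mul, Matrix.neg_mul,
      Matrix.mul_neg, Matrix.smul_mul, Matrix.mul_smul, Matrix.mul_one, Matrix.one_mul,
      Matrix.mul_assoc, cBR, cRBB, cXX, cXtXt, hX, hXt, neg_neg, neg_sub, neg_add, sub_neg_eq_add, smul_add, smul_sub, smul_neg]
    abel
end

section
/- Let A = diag(a_1,…,a_n) be a real diagonal matrix, λ* ∈ ℝ with λ* > a_i for all i, and B = diag(√(λ*−a_1),…,√(λ*−a_n)). Let X, X̃ be real n×r matrices with X^T X = X̃^T X̃ = I_r, set Γ = ½(X̃^T B X + X^T B X̃), P = B X̃ − X Γ, and P̃ = −B X + X̃ Γ. Then X^T P + P^T X = 0, X̃^T P̃ + P̃^T X̃ = 0, and X̃^T P̃ = X^T P; in particular both (X,P) and (X̃,P̃) lie on the cotangent bundle of the Stiefel variety V_{n,r} and the discrete map preserves the SO(r)-momentum Ψ = X^T P − P^T X. -/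
open Matrix

/-- The discrete Neumann map on the Stiefel variety stays on the cotangent
bundle `T*V_{n,r}` and preserves the SO(r)-momentum: `XᵀP + PᵀX = 0`,
`X̃ᵀP̃ + P̃ᵀX̃ = 0` and `X̃ᵀP̃ = XᵀP`. -/
theorem stmt_11 {n r : ℕ} (a : Fin n → ℝ) (lams : ℝ) (hlams : ∀ i, a i < lams)
    (B : Matrix (Fin n) (Fin n) ℝ)
    (hB : B = Matrix.diagonal fun i => Real.sqrt (lams - a i))
    (X Xt : Matrix (Fin n) (Fin r) ℝ) (hX : Xᵀ * X = 1) (hXt : Xtᵀ * Xt = 1)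
    (Γ : Matrix (Fin r) (Fin r) ℝ)
    (hΓ : Γ = (1 / 2 : ℝ) • (Xtᵀ * B * X + Xᵀ * B * Xt))
    (P Pt : Matrix (Fin n) (Fin r) ℝ)
    (hP : P = B * Xt - X * Γ) (hPt : Pt = -(B * X) + Xt * Γ) :
    Xᵀ * P + Pᵀ * X = 0 ∧
      Xtᵀ * Pt + Ptᵀ * Xt = 0 ∧
      Xtᵀ * Pt = Xᵀ * P := by
  have hBt : Bᵀ = B := by rw [hB]; exact Matrix.diagonal_transpose _
  have hΓt : Γᵀ = Γ := by
    rw [hΓ]; simp [Matrix.transpose_smul, Matrix.transpose_add, Matrix.transpose_mul,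
      Matrix.mul_assoc, hBt, add_comm]
  subst hP hPt
  have e1 : Xᵀ * (B * Xt - X * Γ) = Xᵀ * B * Xt - Γ := by
    rw [Matrix.mul_sub, ← Matrix.mul_assoc, ← Matrix.mul_assoc, hX, one_mul]
  have e2 : (B * Xt - X * Γ)ᵀ * X = Xtᵀ * B * X - Γ := by
    rw [Matrix.transpose_sub, Matrix.sub_mul, Matrix.transpose_mul, Matrix.transpose_mul,
      hBt, hΓt, Matrix.mul_assoc Γ, hX, Matrix.mul_one, Matrix.mul_assoc]
  have e3 : Xtᵀ * (-(B * X) + Xt * Γ) = -(Xtᵀ * B * X) + Γ := by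
    rw [Matrix.mul_add, Matrix.mul_neg, ← Matrix.mul_assoc, ← Matrix.mul_assoc, hXt, one_mul]
  have e4 : (-(B * X) + Xt * Γ)ᵀ * Xt = -(Xᵀ * B * Xt) + Γ := by
    rw [Matrix.transpose_add, Matrix.add_mul, Matrix.transpose_neg, Matrix.transpose_mul,
      Matrix.transpose_mul, hBt, hΓt, Matrix.mul_assoc Γ, hXt, Matrix.mul_one,
      Matrix.neg_mul, Matrix.mul_assoc]
  refine ⟨?_, ?_, ?_⟩
  · rw [e1, e2, hΓ]; module
  · rw [e3, e4, hΓ]; module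
  · rw [e1, e3, hΓ]; module
end

section
/- Let J be an n×n real symmetric positive definite matrix with positive square root J^{1/2}. Suppose (X_k), k ∈ ℤ, is a sequence of real n×r matrices with X_k^T X_k = I_r, and (B_k) is a sequence of r×r matrices such that X_{k−1} + X_{k+1} = J^{−1/2} X_k B_k for all k. Define x_k = (−1)^k J^{1/2} X_{2k}, y_k = (−1)^k X_{2k−1}, Δ_k = B_{2k+1}, Ω_k = −B_{2k}. Then x_k^T J^{−1} x_k = I_r, y_k^T y_k = I_r, and the modified billiard equations hold: x_{k+1} − x_k = y_{k+1} Δ_k and y_{k+1} − y_k = J^{−1} x_k Ω_k for all k. -/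
open Matrix

/-- The modified billiard map on the Stiefel variety is a reformulation of the
discrete Neumann system: if `X_{k−1} + X_{k+1} = J^{−1/2} X_k B_k` on
`V_{n,r}`, then `x_k = (−1)^k J^{1/2} X_{2k}`, `y_k = (−1)^k X_{2k−1}`,
`Δ_k = B_{2k+1}`, `Ω_k = −B_{2k}` satisfy `x_kᵀ J⁻¹ x_k = I`, `y_kᵀ y_k = I`,
`x_{k+1} − x_k = y_{k+1} Δ_k` and `y_{k+1} − y_k = J⁻¹ x_k Ω_k`. -/
theorem stmt_15 {n r : ℕ} (J S : Matrix (Fin n) (Fin n) ℝ)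
    (hJpd : J.PosDef) (hSpd : S.PosDef) (hSS : S * S = J)
    (X : ℤ → Matrix (Fin n) (Fin r) ℝ) (B : ℤ → Matrix (Fin r) (Fin r) ℝ)
    (hX : ∀ k, (X k)ᵀ * X k = 1)
    (hEL : ∀ k, X (k - 1) + X (k + 1) = S⁻¹ * X k * B k)
    (x y : ℤ → Matrix (Fin n) (Fin r) ℝ)
    (Δ Ω : ℤ → Matrix (Fin r) (Fin r) ℝ)
    (hx : ∀ k, x k = ((-1 : ℝ) ^ k) • (S * X (2 * k)))
    (hy : ∀ k, y k = ((-1 : ℝ) ^ k) • X (2 * k - 1))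
    (hΔ : ∀ k, Δ k = B (2 * k + 1)) (hΩ : ∀ k, Ω k = -B (2 * k)) :
    (∀ k, (x k)ᵀ * J⁻¹ * x k = 1) ∧
      (∀ k, (y k)ᵀ * y k = 1) ∧
      (∀ k, x (k + 1) - x k = y (k + 1) * Δ k) ∧
      (∀ k, y (k + 1) - y k = J⁻¹ * x k * Ω k) := by
  have hSsymm : Sᵀ = S := hSpd.isHermitian.eq
  have hSunit : IsUnit S.det := by
    simpa [isUnit_iff_ne_zero] using hSpd.det_pos.ne'
  have hSinv : S * S⁻¹ = 1 := mul_nonsing_inv S hSunit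
  have hSinv' : S⁻¹ * S = 1 := nonsing_inv_mul S hSunit
  have hJinv : J⁻¹ = S⁻¹ * S⁻¹ := by
    rw [← hSS, Matrix.mul_inv_rev]
  have hsq : ∀ k : ℤ, ((-1 : ℝ) ^ k) * ((-1 : ℝ) ^ k) = 1 := by
    intro k
    rw [← zpow_add₀ (by norm_num : (-1 : ℝ) ≠ 0)]
    exact Even.neg_one_zpow ⟨k, rfl⟩
  have hneg : ∀ k : ℤ, ((-1 : ℝ) ^ (k + 1)) = -((-1 : ℝ) ^ k) := by
    intro k
    rw [zpow_add₀ (by norm_num : (-1 : ℝ) ≠ 0), zpow_one, mul_neg_one]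
  refine ⟨?_, ?_, ?_, ?_⟩
  · intro k
    rw [hx, hJinv]
    rw [transpose_smul, transpose_mul, hSsymm]
    rw [smul_mul, smul_mul, Matrix.mul_smul, smul_smul, hsq, one_smul]
    calc (X (2 * k))ᵀ * S * (S⁻¹ * S⁻¹) * (S * X (2 * k))
        = (X (2 * k))ᵀ * ((S * S⁻¹) * ((S⁻¹ * S) * X (2 * k))) := by
          simp only [Matrix.mul_assoc]
      _ = 1 := by rw [hSinv, hSinv']; simpa using hX (2 * k)
  · intro k
    rw [hy, transpose_smul, smul_mul, Matrix.mul_smul, smul_smul, hsq, one_smul]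
    exact hX (2 * k - 1)
  · intro k
    have hE := hEL (2 * k + 1)
    have h1 : 2 * k + 1 - 1 = 2 * k := by ring
    have h2 : 2 * k + 1 + 1 = 2 * (k + 1) := by ring
    rw [h1, h2] at hE
    have h3 : 2 * (k + 1) - 1 = 2 * k + 1 := by ring
    rw [hx, hx, hy, hΔ, h3, hneg, neg_smul, smul_mul, neg_smul]
    rw [sub_eq_iff_eq_add]
    calc -((-1 : ℝ) ^ k • (S * X (2 * (k + 1))))
        = (-1 : ℝ) ^ k • (S * X (2 * k) - S * (X (2 * k) + X (2 * (k + 1)))) := by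
          rw [Matrix.mul_add, smul_sub, smul_add]; abel
      _ = (-1 : ℝ) ^ k • (S * X (2 * k) - S * (S⁻¹ * X (2 * k + 1) * B (2 * k + 1))) := by
          rw [hE]
      _ = -((-1 : ℝ) ^ k • (X (2 * k + 1) * B (2 * k + 1))) + (-1 : ℝ) ^ k • (S * X (2 * k)) := by
          rw [← Matrix.mul_assoc, ← Matrix.mul_assoc, hSinv, Matrix.one_mul, smul_sub]
          abel
  · intro k
    have hE := hEL (2 * k)
    have h2 : 2 * k + 1 = 2 * (k + 1) - 1 := by ring
    rw [h2] at hE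
    rw [hy, hy, hx, hΩ, hJinv, hneg, neg_smul]
    have key : S⁻¹ * S⁻¹ * (S * X (2 * k)) = S⁻¹ * X (2 * k) := by
      rw [Matrix.mul_assoc, ← Matrix.mul_assoc S⁻¹ S, hSinv', Matrix.one_mul]
    have hRHS : S⁻¹ * S⁻¹ * ((-1 : ℝ) ^ k • (S * X (2 * k))) * -B (2 * k)
        = -((-1 : ℝ) ^ k • (S⁻¹ * X (2 * k) * B (2 * k))) := by
      rw [Matrix.mul_smul, Matrix.smul_mul, key, Matrix.mul_neg, smul_neg]
    rw [hRHS, ← hE, smul_add]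
    abel
end

section
/- Let A = diag(a_1,…,a_n) be a real diagonal matrix and q, p ∈ ℝ^n with ⟨q, q⟩ = 1. Set 𝔲 = ⟨q, Aq⟩ − 2⟨p, q⟩, let α be a real number with α ≠ 0 and α² = ⟨Aq − 𝔲q − p, Aq − 𝔲q − p⟩, and define q̃ = (Aq − 𝔲q − p)/α and p̃ = α q. Then ⟨q̃, q̃⟩ = 1 and ⟨p̃, q̃⟩ = ⟨p, q⟩; i.e. the Ragnisco map is well defined on S^{n−1} × ℝ^n and preserves the function ⟨p, q⟩. -/
open Matrix

/-- The Ragnisco map `(q,p) ↦ (q̃,p̃)`, with `q̃ = (Aq − 𝔲q − p)/α`,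
`p̃ = αq`, `𝔲 = ⟨q,Aq⟩ − 2⟨p,q⟩`, `α² = |Aq − 𝔲q − p|²`, is well defined on
`S^{n−1} × ℝⁿ` and preserves `⟨p, q⟩`. -/
theorem stmt_17 {n : ℕ} (a : Fin n → ℝ)
    (A : Matrix (Fin n) (Fin n) ℝ) (hA : A = Matrix.diagonal a)
    (q p : Fin n → ℝ) (hq : q ⬝ᵥ q = 1)
    (u α : ℝ) (hu : u = q ⬝ᵥ (A *ᵥ q) - 2 * (p ⬝ᵥ q))
    (hα : α ≠ 0)
    (hα2 : α ^ 2 = (A *ᵥ q - u • q - p) ⬝ᵥ (A *ᵥ q - u • q - p))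
    (qt pt : Fin n → ℝ)
    (hqt : qt = α⁻¹ • (A *ᵥ q - u • q - p))
    (hpt : pt = α • q) :
    qt ⬝ᵥ qt = 1 ∧ pt ⬝ᵥ qt = p ⬝ᵥ q := by
  constructor
  · rw [hqt, smul_dotProduct, dotProduct_smul, ← hα2, smul_eq_mul, smul_eq_mul]
    field_simp
  · rw [hpt, hqt, smul_dotProduct, dotProduct_smul, smul_eq_mul, smul_eq_mul,
      ← mul_assoc, mul_inv_cancel₀ hα, one_mul, dotProduct_sub, dotProduct_sub,
      dotProduct_smul, smul_eq_mul, hq, mul_one, dotProduct_comm q p, hu]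
    ring
end

section
/- Let A = diag(a_1,…,a_n) be a real diagonal matrix with distinct entries, and let q, p ∈ ℝ^n satisfy ⟨q, q⟩ = 1. Set 𝔲 = ⟨q, Aq⟩ − 2⟨p, q⟩, let α ≠ 0 with α² = ⟨Aq − 𝔲q − p, Aq − 𝔲q − p⟩, and define q̃ = (Aq − 𝔲q − p)/α, p̃ = α q. For λ ∉ {a_1,…,a_n} define the 2×2 matrices L_R(λ) = [[1/2 + Σ_i q_i p_i/(λ−a_i), Σ_i q_i²/(λ−a_i)],[−Σ_i p_i²/(λ−a_i), −1/2 − Σ_i q_i p_i/(λ−a_i)]], the matrix L̃_R(λ) given by the same formula with (q, p) replaced by (q̃, p̃), and M_R(λ) = [[0, −1],[α², λ − ⟨q, Aq⟩ + 2⟨p, q⟩]]. Then L_R(λ) M_R(λ) = M_R(λ) L̃_R(λ) for all such λ. -/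
open Matrix

/-- Discrete Lax representation of the Ragnisco discretization of the Neumann
system: `L_R(λ) M_R(λ) = M_R(λ) L̃_R(λ)` for all `λ ∉ {a_1,…,a_n}`. -/
theorem stmt_18 {n : ℕ} (a : Fin n → ℝ) (ha : Function.Injective a)
    (A : Matrix (Fin n) (Fin n) ℝ) (hA : A = Matrix.diagonal a)
    (q p : Fin n → ℝ) (hq : q ⬝ᵥ q = 1)
    (u α : ℝ) (hu : u = q ⬝ᵥ (A *ᵥ q) - 2 * (p ⬝ᵥ q))
    (hα : α ≠ 0)
    (hα2 : α ^ 2 = (A *ᵥ q - u • q - p) ⬝ᵥ (A *ᵥ q - u • q - p))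
    (qt pt : Fin n → ℝ)
    (hqt : qt = α⁻¹ • (A *ᵥ q - u • q - p))
    (hpt : pt = α • q)
    (LR : (Fin n → ℝ) → (Fin n → ℝ) → ℝ → Matrix (Fin 2) (Fin 2) ℝ)
    (hLR : ∀ (x y : Fin n → ℝ) (lam : ℝ),
      LR x y lam =
        !![1 / 2 + ∑ i, x i * y i / (lam - a i), ∑ i, x i ^ 2 / (lam - a i);
           -∑ i, y i ^ 2 / (lam - a i), -(1 / 2) - ∑ i, x i * y i / (lam - a i)])
    (MR : ℝ → Matrix (Fin 2) (Fin 2) ℝ)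
    (hMR : ∀ lam : ℝ,
      MR lam = !![0, -1; α ^ 2, lam - q ⬝ᵥ (A *ᵥ q) + 2 * (p ⬝ᵥ q)]) :
    ∀ lam : ℝ, (∀ i, lam ≠ a i) →
      LR q p lam * MR lam = MR lam * LR qt pt lam := by
  intro lam hlam
  have ht : ∀ i, lam - a i ≠ 0 := fun i => sub_ne_zero.mpr (hlam i)
  subst hA hqt hpt
  rw [hLR, hLR, hMR]
  simp only [Pi.smul_apply, Pi.sub_apply, Matrix.mulVec_diagonal, smul_eq_mul]
  have hsq : ∑ i, q i ^ 2 = 1 := by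
    simpa [dotProduct, pow_two] using hq
  have huu : lam - ∑ x, q x * (a x * q x) + 2 * ∑ i, p i * q i = lam - u := by
    simp only [dotProduct, Matrix.mulVec_diagonal] at hu
    rw [hu]; ring
  have hPt : ∑ x, (α * q x) ^ 2 / (lam - a x) = α ^ 2 * ∑ i, q i ^ 2 / (lam - a i) := by
    rw [Finset.mul_sum]
    exact Finset.sum_congr rfl fun x _ => by rw [mul_pow, mul_div_assoc]
  have hFt : ∑ x, α⁻¹ * (a x * q x - u * q x - p x) * (α * q x) / (lam - a x)
      = (lam - u) * (∑ i, q i ^ 2 / (lam - a i)) - (∑ i, q i * p i / (lam - a i)) - 1 := by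
    have : ∑ x, α⁻¹ * (a x * q x - u * q x - p x) * (α * q x) / (lam - a x)
        = ∑ x, ((lam - u) * (q x ^ 2 / (lam - a x)) - q x * p x / (lam - a x) - q x ^ 2) := by
      refine Finset.sum_congr rfl fun x _ => ?_
      field_simp [ht x, hα]
      ring
    rw [this, Finset.sum_sub_distrib, Finset.sum_sub_distrib, ← Finset.mul_sum, hsq]
  have hQt : α ^ 2 * ∑ x, (α⁻¹ * (a x * q x - u * q x - p x)) ^ 2 / (lam - a x)
      = (lam - u) ^ 2 * (∑ i, q i ^ 2 / (lam - a i))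
        - 2 * (lam - u) * (∑ i, q i * p i / (lam - a i))
        + (∑ i, p i ^ 2 / (lam - a i))
        - 2 * (lam - u) + (lam - ∑ x, q x * (a x * q x) + 2 * ∑ i, p i * q i) := by
    rw [Finset.mul_sum]
    have h1 : ∀ x, α ^ 2 * ((α⁻¹ * (a x * q x - u * q x - p x)) ^ 2 / (lam - a x))
        = (lam - u) ^ 2 * (q x ^ 2 / (lam - a x))
          - 2 * (lam - u) * (q x * p x / (lam - a x))
          + p x ^ 2 / (lam - a x)
          - 2 * (lam - u) * q x ^ 2 + (lam * q x ^ 2 - q x * (a x * q x)) + 2 * (p x * q x) := by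
      intro x
      field_simp [ht x, hα]
      ring
    rw [Finset.sum_congr rfl fun x _ => h1 x]
    rw [Finset.sum_add_distrib, Finset.sum_add_distrib, Finset.sum_sub_distrib,
      Finset.sum_sub_distrib, Finset.sum_add_distrib, Finset.sum_sub_distrib,
      ← Finset.mul_sum, ← Finset.mul_sum, ← Finset.mul_sum, ← Finset.mul_sum,
      ← Finset.mul_sum, hsq]
    ring
  ext i j
  fin_cases i <;> fin_cases j <;>
    simp only [Matrix.mul_apply, Fin.sum_univ_two, dotProduct, Matrix.mulVec_diagonal,
      Matrix.cons_val', Matrix.cons_val_zero, Matrix.cons_val_one, Matrix.head_cons,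
      Matrix.empty_val', Matrix.cons_val_fin_one, Matrix.head_fin_const, Fin.isValue,
      Fin.zero_eta, Fin.mk_one, Matrix.of_apply]
  · rw [hPt]; ring
  · rw [hFt, huu]; ring
  · rw [hFt, hPt, huu]; ring
  · rw [hQt, hFt, huu]; ring
end

section
/- Let A = diag(a_1,…,a_n) be a real diagonal matrix, λ* ∈ ℝ with λ* > a_i for all i, and B = diag(√(λ*−a_1),…,√(λ*−a_n)). Suppose (X_k), k ∈ ℤ, is a sequence of real n×r matrices with X_k^T X_k = I_r, (Γ_k) is the sequence of symmetric multipliers Γ_k = ½(X_{k+1}^T B X_k + X_k^T B X_{k+1}), and the momenta P_k satisfy both P_k = B X_{k+1} − X_k Γ_k and P_k = −B X_{k−1} + X_k Γ_{k−1} for all k. Then the discrete Euler–Lagrange equations hold: X_{k−1} + X_{k+1} = B^{−1} X_k B_k with B_k = Γ_{k−1} + Γ_k; moreover B_k satisfies the matrix equation B_k (X_k^T B^{−2} X_k) B_k − (X_{k−1}^T B^{−1} X_k) B_k − B_k (X_k^T B^{−1} X_{k−1}) = 0, which determines B_k from X_{k−1} and X_k alone. -/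
open Matrix

/-- The discrete Neumann system on the Stiefel variety satisfies the
Moser–Veselov discrete Euler–Lagrange equations
`X_{k−1} + X_{k+1} = B⁻¹ X_k B_k` with `B_k = Γ_{k−1} + Γ_k`, and `B_k`
satisfies a matrix equation determined by `X_{k−1}` and `X_k` alone. -/
theorem stmt_19 {n r : ℕ} (a : Fin n → ℝ) (lams : ℝ) (hlams : ∀ i, a i < lams)
    (B : Matrix (Fin n) (Fin n) ℝ)
    (hB : B = Matrix.diagonal fun i => Real.sqrt (lams - a i))
    (X P : ℤ → Matrix (Fin n) (Fin r) ℝ)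
    (Γ : ℤ → Matrix (Fin r) (Fin r) ℝ)
    (hX : ∀ k, (X k)ᵀ * X k = 1)
    (hΓ : ∀ k, Γ k =
      (1 / 2 : ℝ) • ((X (k + 1))ᵀ * B * X k + (X k)ᵀ * B * X (k + 1)))
    (hP1 : ∀ k, P k = B * X (k + 1) - X k * Γ k)
    (hP2 : ∀ k, P k = -(B * X (k - 1)) + X k * Γ (k - 1)) :
    ∀ k : ℤ,
      X (k - 1) + X (k + 1) = B⁻¹ * X k * (Γ (k - 1) + Γ k) ∧
      (Γ (k - 1) + Γ k) * ((X k)ᵀ * (B⁻¹ * B⁻¹) * X k) * (Γ (k - 1) + Γ k) -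
          ((X (k - 1))ᵀ * B⁻¹ * X k) * (Γ (k - 1) + Γ k) -
          (Γ (k - 1) + Γ k) * ((X k)ᵀ * B⁻¹ * X (k - 1)) = 0 := by
  -- B is invertible
  have hdet : IsUnit B.det := by
    rw [hB, Matrix.det_diagonal]
    refine isUnit_iff_ne_zero.mpr (ne_of_gt (Finset.prod_pos fun i _ => ?_))
    exact Real.sqrt_pos.mpr (sub_pos.mpr (hlams i))
  have hBinv : B⁻¹ * B = 1 := Matrix.nonsing_inv_mul B hdet
  have hBT : Bᵀ = B := by rw [hB]; exact Matrix.diagonal_transpose _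
  have hBiT : (B⁻¹)ᵀ = B⁻¹ := by rw [Matrix.transpose_nonsing_inv, hBT]
  -- Γ is symmetric
  have hΓT : ∀ k, (Γ k)ᵀ = Γ k := by
    intro k
    rw [hΓ k]
    simp [Matrix.transpose_smul, Matrix.transpose_add, Matrix.transpose_mul, hBT,
      Matrix.mul_assoc, add_comm]
  intro k
  have hkey : B * (X (k - 1) + X (k + 1)) = X k * (Γ (k - 1) + Γ k) := by
    have h := (hP1 k).symm.trans (hP2 k)
    rw [sub_eq_iff_eq_add] at h
    rw [Matrix.mul_add, Matrix.mul_add, h]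
    abel
  have h1 : X (k - 1) + X (k + 1) = B⁻¹ * X k * (Γ (k - 1) + Γ k) := by
    calc X (k - 1) + X (k + 1) = B⁻¹ * B * (X (k - 1) + X (k + 1)) := by
          rw [hBinv, Matrix.one_mul]
      _ = B⁻¹ * (B * (X (k - 1) + X (k + 1))) := by rw [Matrix.mul_assoc]
      _ = B⁻¹ * (X k * (Γ (k - 1) + Γ k)) := by rw [hkey]
      _ = B⁻¹ * X k * (Γ (k - 1) + Γ k) := by rw [Matrix.mul_assoc]
  refine ⟨h1, ?_⟩
  set Bk := Γ (k - 1) + Γ k with hBk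
  have hBkT : Bkᵀ = Bk := by
    rw [hBk, Matrix.transpose_add, hΓT, hΓT]
  have hE : X (k + 1) = B⁻¹ * X k * Bk - X (k - 1) := by
    rw [← h1]; abel
  have hexp : Bk * ((X k)ᵀ * (B⁻¹ * B⁻¹) * X k) * Bk -
      ((X (k - 1))ᵀ * B⁻¹ * X k) * Bk - Bk * ((X k)ᵀ * B⁻¹ * X (k - 1)) =
      (X (k + 1))ᵀ * X (k + 1) - (X (k - 1))ᵀ * X (k - 1) := by
    rw [hE]
    simp only [Matrix.transpose_sub, Matrix.transpose_mul, hBiT, hBkT,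
      Matrix.sub_mul, Matrix.mul_sub, Matrix.mul_assoc]
    abel
  rw [hexp, hX, hX, sub_self]
end
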